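/- Truth Lemma: for every world Γ (maximal consistent subset of the closure Σ) of the canonical model C_Σ and every formula φ ∈ Σ, φ ∈ Γ if and only if C_Σ, Γ ⊨ φ. -/

import Mathlib

/-- CIEL world formulae over agent formulae `AgF` and world atoms `At`,
with `⊥` and `→` as primitive Boolean connectives. -/
inductive WF (AgF At : Type) : Type
  | bot
  | atom (p : At)
  | imp (φ χ : WF AgF At)
  | C (ψ : AgF) (φ : WF AgF At)

/-- Negation `¬φ := φ → ⊥`. -/
def wneg {AgF At : Type} (φ : WF AgF At) : WF AgF At := .imp φ .bot

/-- Conjunction `φ ∧ χ := ¬(φ → ¬χ)`. -/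
def wand {AgF At : Type} (φ χ : WF AgF At) : WF AgF At := wneg (.imp φ (wneg χ))

/-- `P_ψ φ := ¬C_ψ ¬φ`. -/
def wP {AgF At : Type} (ψ : AgF) (φ : WF AgF At) : WF AgF At := wneg (.C ψ (wneg φ))

/-- Conjunction of a finite list of formulae. -/
def conj {AgF At : Type} : List (WF AgF At) → WF AgF At
  | [] => wneg .bot
  | φ :: l => wand φ (conj l)

/-- The Hilbert system `C5`: a complete propositional base together with the
axioms (T), (⊥), (K), (4), (5), (Ind) and the rules (Nec) and (AM); the rule
(AM) refers to derivability `AgDer γ ψ` of `γ → ψ` in the agent logic, and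
`agBot`, `agOr` are falsum and disjunction of agent formulae. -/
inductive C5 {AgF At : Type} (AgDer : AgF → AgF → Prop) (agBot : AgF)
    (agOr : AgF → AgF → AgF) : WF AgF At → Prop
  | ax1 (φ χ) : C5 AgDer agBot agOr (.imp φ (.imp χ φ))
  | ax2 (φ χ θ) : C5 AgDer agBot agOr
      (.imp (.imp φ (.imp χ θ)) (.imp (.imp φ χ) (.imp φ θ)))
  | ax3 (φ χ) : C5 AgDer agBot agOr
      (.imp (.imp (wneg φ) (wneg χ)) (.imp χ φ))
  | mp {φ χ} : C5 AgDer agBot agOr (.imp φ χ) → C5 AgDer agBot agOr φ →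
      C5 AgDer agBot agOr χ
  | axT (ψ φ) : C5 AgDer agBot agOr (.imp (.C ψ φ) φ)
  | axBot (φ) : C5 AgDer agBot agOr (.imp φ (.C agBot φ))
  | axK (ψ φ γ) : C5 AgDer agBot agOr
      (.imp (.C ψ (.imp φ γ)) (.imp (.C ψ φ) (.C ψ γ)))
  | ax4 (ψ φ) : C5 AgDer agBot agOr (.imp (.C ψ φ) (.C ψ (.C ψ φ)))
  | ax5 (ψ φ) : C5 AgDer agBot agOr
      (.imp (wneg (.C ψ φ)) (.C ψ (wneg (.C ψ φ))))
  | axInd (ψ χ φ) : C5 AgDer agBot agOr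
      (.imp (.C (agOr ψ χ) (.imp φ (wand (.C ψ φ) (.C χ φ))))
        (.imp φ (.C (agOr ψ χ) φ)))
  | nec {φ} (ψ) : C5 AgDer agBot agOr φ → C5 AgDer agBot agOr (.C ψ φ)
  | am {γ ψ} (φ) : AgDer γ ψ →
      C5 AgDer agBot agOr (.imp (.C ψ φ) (.C γ φ))

/-- A formula is consistent if its negation is not derivable. -/
def Consistent {AgF At : Type} (AgDer : AgF → AgF → Prop) (agBot : AgF)
    (agOr : AgF → AgF → AgF) (φ : WF AgF At) : Prop :=
  ¬ C5 AgDer agBot agOr (wneg φ)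

/-- `Γ` is a maximal consistent subset of `Σ`. -/
def MCS {AgF At : Type} (AgDer : AgF → AgF → Prop) (agBot : AgF)
    (agOr : AgF → AgF → AgF) (Sig Γ : Finset (WF AgF At)) : Prop :=
  Γ ⊆ Sig ∧ Consistent AgDer agBot agOr (conj Γ.toList) ∧
    ∀ Δ : Finset (WF AgF At), Δ ⊆ Sig → Γ ⊆ Δ →
      Consistent AgDer agBot agOr (conj Δ.toList) → Δ = Γ

/-- The canonical pseudo-relation: `Γ ∼^p_ψ Δ` iff `Γ̂ ∧ P_ψ Δ̂` is consistent. -/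
def relP {AgF At : Type} (AgDer : AgF → AgF → Prop) (agBot : AgF)
    (agOr : AgF → AgF → AgF) (ψ : AgF) (Γ Δ : Finset (WF AgF At)) : Prop :=
  Consistent AgDer agBot agOr (wand (conj Γ.toList) (wP ψ (conj Δ.toList)))

/-- Normalized negation: `¬̇(¬χ) = χ` and `¬̇φ = ¬φ` otherwise. -/
def sneg {AgF At : Type} : WF AgF At → WF AgF At
  | .imp φ .bot => φ
  | φ => wneg φ

/-- The disjunction `⋁_{ψ ∈ l} ψ` of a list of agent formulae. -/
def bigOrA {AgF : Type} (agBot : AgF) (agOr : AgF → AgF → AgF)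
    (l : List AgF) : AgF :=
  l.foldr agOr agBot

/-- Satisfaction in the canonical model `C_Σ`: worlds are the maximal
consistent subsets of `Σ`, world atoms are interpreted by membership, and
`∼_a := ∼^p_{â}`; `C_ψ` is the box over the reflexive-transitive closure of
the union of the `∼_a` for `a ∈ ⟦ψ⟧`. -/
def satCan {AgF At Ag : Type} (AgDer : AgF → AgF → Prop) (agBot : AgF)
    (agOr : AgF → AgF → AgF) (ext : AgF → Finset Ag) (hat : Ag → AgF)
    (Sig : Finset (WF AgF At))
    (Γ : {Θ : Finset (WF AgF At) // MCS AgDer agBot agOr Sig Θ}) :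
    WF AgF At → Prop
  | .bot => False
  | .atom p => WF.atom p ∈ Γ.1
  | .imp φ χ => satCan AgDer agBot agOr ext hat Sig Γ φ →
      satCan AgDer agBot agOr ext hat Sig Γ χ
  | .C ψ φ =>
      ∀ Δ : {Θ : Finset (WF AgF At) // MCS AgDer agBot agOr Sig Θ},
        Relation.ReflTransGen
          (fun Θ Θ' => ∃ a ∈ ext ψ, relP AgDer agBot agOr (hat a) Θ.1 Θ'.1)
          Γ Δ →
        satCan AgDer agBot agOr ext hat Sig Δ φ

namespace TruthAux

attribute [local instance] Classical.propDecidable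

noncomputable instance instDecEqWF {AgF At : Type} : DecidableEq (WF AgF At) :=
  fun _ _ => Classical.propDecidable _

section Hilbert

variable {AgF At : Type} {AgDer : AgF → AgF → Prop} {agBot : AgF} {agOr : AgF → AgF → AgF}

local notation "⊩" φ => C5 AgDer agBot agOr φ

/-- iterated implication context -/
def ictx {AgF At : Type} (l : List (WF AgF At)) (φ : WF AgF At) : WF AgF At :=
  l.foldr .imp φ

theorem dI (a : WF AgF At) : ⊩ .imp a a :=
  C5.mp (C5.mp (C5.ax2 a (a.imp a) a) (C5.ax1 a (a.imp a))) (C5.ax1 a a)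

theorem compL {x u t : WF AgF At} (h : ⊩ .imp u t) : ⊩ .imp (.imp x u) (.imp x t) :=
  C5.mp (C5.ax2 x u t) (C5.mp (C5.ax1 _ _) h)

theorem dcomp {a b c : WF AgF At} (h1 : ⊩ .imp b c) (h2 : ⊩ .imp a b) : ⊩ .imp a c :=
  C5.mp (compL h1) h2

theorem lift2 {u v w x : WF AgF At} (h : ⊩ .imp u (.imp v w)) :
    ⊩ .imp (.imp x u) (.imp (.imp x v) (.imp x w)) :=
  dcomp (C5.ax2 x v w) (compL h)

theorem foldr_mp (l : List (WF AgF At)) (a b : WF AgF At) :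
    ⊩ .imp (ictx l (.imp a b)) (.imp (ictx l a) (ictx l b)) := by
  induction l with
  | nil => exact dI _
  | cons x l ih => exact lift2 ih

theorem Dctx.mp {l : List (WF AgF At)} {a b : WF AgF At}
    (h1 : ⊩ ictx l (.imp a b)) (h2 : ⊩ ictx l a) : ⊩ ictx l b :=
  C5.mp (C5.mp (foldr_mp l a b) h1) h2

theorem Dctx.of {l : List (WF AgF At)} {a : WF AgF At} (h : ⊩ a) : ⊩ ictx l a := by
  induction l with
  | nil => exact h
  | cons x l ih => exact C5.mp (.ax1 _ _) ih

theorem impSelf (a : WF AgF At) (l : List (WF AgF At)) : ⊩ .imp a (ictx l a) := by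
  induction l with
  | nil => exact dI a
  | cons x l ih => exact dcomp (C5.ax1 (ictx l a) x) ih

theorem Dctx.ax {l : List (WF AgF At)} {a : WF AgF At} (h : a ∈ l) : ⊩ ictx l a := by
  induction l with
  | nil => exact absurd h List.not_mem_nil
  | cons x l ih =>
    rcases List.mem_cons.1 h with rfl | h'
    · exact impSelf a l
    · exact C5.mp (.ax1 _ _) (ih h')

theorem Dctx.peel {l' : List (WF AgF At)} {a : WF AgF At} :
    ∀ l : List (WF AgF At), (∀ x ∈ l, x ∈ l') → (⊩ ictx l' (ictx l a)) → ⊩ ictx l' a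
  | [], _, h => h
  | x :: l, hsub, h =>
    Dctx.peel l (fun y hy => hsub y (List.mem_cons_of_mem x hy))
      (Dctx.mp h (Dctx.ax (hsub x List.mem_cons_self)))

theorem Dctx.mono {l l' : List (WF AgF At)} {a : WF AgF At}
    (hsub : ∀ x ∈ l, x ∈ l') (h : ⊩ ictx l a) : ⊩ ictx l' a :=
  Dctx.peel l hsub (Dctx.of h)

theorem dni (a : WF AgF At) : ⊩ .imp a (wneg (wneg a)) := by
  have h1 : ⊩ ictx [a, wneg a] (wneg a) := Dctx.ax (by simp)
  have h2 : ⊩ ictx [a, wneg a] a := Dctx.ax (by simp)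
  exact Dctx.mp h1 h2

theorem dne (a : WF AgF At) : ⊩ .imp (wneg (wneg a)) a :=
  C5.mp (C5.ax3 a (wneg (wneg a))) (dni (wneg a))

theorem dExfalsoNeg (a b : WF AgF At) : ⊩ .imp (wneg a) (.imp a b) := by
  have h1 : ⊩ ictx [wneg a] (.imp (.imp (wneg b) (wneg a)) (.imp a b)) :=
    Dctx.of (C5.ax3 b a)
  have h2 : ⊩ ictx [wneg a] (.imp (wneg b) (wneg a)) :=
    Dctx.mp (Dctx.of (C5.ax1 (wneg a) (wneg b))) (Dctx.ax (by simp))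
  exact Dctx.mp h1 h2

theorem dNegImp (a b : WF AgF At) : ⊩ .imp a (.imp (wneg b) (wneg (.imp a b))) := by
  have h1 : ⊩ ictx [a, wneg b, .imp a b] (wneg b) := Dctx.ax (by simp)
  have h2 : ⊩ ictx [a, wneg b, .imp a b] b :=
    Dctx.mp (Dctx.ax (l := [a, wneg b, .imp a b]) (a := .imp a b) (by simp))
      (Dctx.ax (by simp))
  exact Dctx.mp h1 h2

theorem cases_D {a g : WF AgF At} (h1 : ⊩ .imp a g) (h2 : ⊩ .imp (wneg a) g) : ⊩ g := by
  have c1 : ⊩ ictx [wneg g] (wneg a) := by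
    have t1 : ⊩ ictx [wneg g, a] g := Dctx.mp (Dctx.of h1) (Dctx.ax (by simp))
    have t2 : ⊩ ictx [wneg g, a] (wneg g) := Dctx.ax (by simp)
    exact Dctx.mp (l := [wneg g, a]) (b := .bot) t2 t1
  have c2 : ⊩ ictx [wneg g] (wneg (wneg a)) := by
    have t1 : ⊩ ictx [wneg g, wneg a] g := Dctx.mp (Dctx.of h2) (Dctx.ax (by simp))
    have t2 : ⊩ ictx [wneg g, wneg a] (wneg g) := Dctx.ax (by simp)
    exact Dctx.mp (l := [wneg g, wneg a]) (b := .bot) t2 t1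
  exact C5.mp (dne g) (Dctx.mp c2 c1)

/-! ### Propositional skeletons and a tautology theorem (Kalmár) -/

end Hilbert

inductive PF (W : Type) : Type
  | bot
  | var (w : W)
  | imp (p q : PF W)

namespace PF

def toW {AgF At : Type} : PF (WF AgF At) → WF AgF At
  | bot => .bot
  | var w => w
  | imp p q => .imp p.toW q.toW

def eval {W : Type} (v : W → Prop) : PF W → Prop
  | bot => False
  | var w => v w
  | imp p q => p.eval v → q.eval v

def vars {W : Type} : PF W → List W
  | bot => []
  | var w => [w]
  | imp p q => p.vars ++ q.vars

def neg {W : Type} (p : PF W) : PF W := p.imp bot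
def and {W : Type} (p q : PF W) : PF W := (p.imp q.neg).neg
def or {W : Type} (p q : PF W) : PF W := p.neg.imp q

@[simp] theorem eval_bot {W : Type} (v : W → Prop) : eval v bot ↔ False := Iff.rfl
@[simp] theorem eval_var {W : Type} (v : W → Prop) (w : W) : eval v (var w) ↔ v w := Iff.rfl
@[simp] theorem eval_imp {W : Type} (v : W → Prop) (p q : PF W) :
    eval v (imp p q) ↔ (eval v p → eval v q) := Iff.rfl
@[simp] theorem eval_neg {W : Type} (v : W → Prop) (p : PF W) :
    eval v p.neg ↔ ¬ eval v p := Iff.rfl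
@[simp] theorem eval_and {W : Type} (v : W → Prop) (p q : PF W) :
    eval v (p.and q) ↔ (eval v p ∧ eval v q) := by
  simp only [and, neg, eval]; tauto
@[simp] theorem eval_or {W : Type} (v : W → Prop) (p q : PF W) :
    eval v (p.or q) ↔ (eval v p ∨ eval v q) := by
  simp only [or, neg, eval]; tauto

end PF

/-- World-level disjunction. -/
def wor {AgF At : Type} (a b : WF AgF At) : WF AgF At := .imp (wneg a) b

theorem PF.toW_neg {AgF At : Type} (p : PF (WF AgF At)) : p.neg.toW = wneg p.toW := rfl
theorem PF.toW_and {AgF At : Type} (p q : PF (WF AgF At)) :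
    (p.and q).toW = wand p.toW q.toW := rfl
theorem PF.toW_or {AgF At : Type} (p q : PF (WF AgF At)) :
    (p.or q).toW = wor p.toW q.toW := rfl

section Kalmar

variable {AgF At : Type} {AgDer : AgF → AgF → Prop} {agBot : AgF} {agOr : AgF → AgF → AgF}

local notation "⊩" φ => C5 AgDer agBot agOr φ

/-- signed literal -/
noncomputable def sgn (v : WF AgF At → Prop) (w : WF AgF At) : WF AgF At :=
  if v w then w else wneg w

theorem kalmar (p : PF (WF AgF At)) (v : WF AgF At → Prop) (L : List (WF AgF At))
    (hL : ∀ w ∈ p.vars, w ∈ L) :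
    ⊩ ictx (L.map (sgn v)) (if p.eval v then p.toW else wneg p.toW) := by
  induction p with
  | bot =>
    rw [if_neg (by simp)]
    exact Dctx.of (dI .bot)
  | var w =>
    have hm : sgn v w ∈ L.map (sgn v) :=
      List.mem_map_of_mem (hL w (by simp [PF.vars]))
    by_cases h : v w
    · rw [if_pos (by simpa [PF.eval] using h)]
      have := Dctx.ax (AgDer := AgDer) (agBot := agBot) (agOr := agOr) hm
      rwa [show sgn v w = w from if_pos h] at this
    · rw [if_neg (by simpa [PF.eval] using h)]
      have := Dctx.ax (AgDer := AgDer) (agBot := agBot) (agOr := agOr) hm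
      rwa [show sgn v w = wneg w from if_neg h] at this
  | imp p q ihp ihq =>
    have hLp : ∀ w ∈ p.vars, w ∈ L := fun w hw => hL w (List.mem_append.2 (Or.inl hw))
    have hLq : ∀ w ∈ q.vars, w ∈ L := fun w hw => hL w (List.mem_append.2 (Or.inr hw))
    by_cases hq : q.eval v
    · have hQ := ihq hLq
      rw [if_pos hq] at hQ
      rw [if_pos (show (PF.imp p q).eval v from fun _ => hq)]
      exact Dctx.mp (Dctx.of (C5.ax1 q.toW p.toW)) hQ
    · by_cases hp : p.eval v
      · have hP := ihp hLp; rw [if_pos hp] at hP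
        have hQ := ihq hLq; rw [if_neg hq] at hQ
        rw [if_neg (show ¬ (PF.imp p q).eval v from fun hh => hq (hh hp))]
        exact Dctx.mp (Dctx.mp (Dctx.of (dNegImp p.toW q.toW)) hP) hQ
      · have hP := ihp hLp; rw [if_neg hp] at hP
        rw [if_pos (show (PF.imp p q).eval v from fun hh => absurd hh hp)]
        exact Dctx.mp (Dctx.of (dExfalsoNeg p.toW q.toW)) hP

theorem elim_vars {c : WF AgF At} :
    ∀ L : List (WF AgF At), L.Nodup → (∀ v, ⊩ ictx (L.map (sgn v)) c) → ⊩ c := by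
  intro L
  induction L with
  | nil => intro _ h; exact h (fun _ => True)
  | cons w L ih =>
    intro hnd h
    refine ih hnd.of_cons (fun v => ?_)
    have hw : w ∉ L := (List.nodup_cons.1 hnd).1
    have key : ∀ (v' : WF AgF At → Prop), (∀ x ∈ L, sgn v' x = sgn v x) →
        sgn v' w = sgn v' w → True := fun _ _ _ => trivial
    have e1 : List.map (sgn (fun x => x = w ∨ v x)) L = List.map (sgn v) L := by
      refine List.map_congr_left (fun x hx => ?_)
      have hxw : x ≠ w := fun hh => hw (hh ▸ hx)
      by_cases hv : v x <;> simp [sgn, hv, hxw]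
    have e0 : List.map (sgn (fun x => x ≠ w ∧ v x)) L = List.map (sgn v) L := by
      refine List.map_congr_left (fun x hx => ?_)
      have hxw : x ≠ w := fun hh => hw (hh ▸ hx)
      by_cases hv : v x <;> simp [sgn, hv, hxw]
    have h1 := h (fun x => x = w ∨ v x)
    have h0 := h (fun x => x ≠ w ∧ v x)
    simp only [List.map_cons, e1, e0] at h1 h0
    rw [show sgn (fun x => x = w ∨ v x) w = w by simp [sgn]] at h1
    rw [show sgn (fun x => x ≠ w ∧ v x) w = wneg w by simp [sgn]] at h0
    exact cases_D h1 h0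

theorem taut (p : PF (WF AgF At)) (h : ∀ v, p.eval v) : ⊩ p.toW := by
  refine elim_vars p.vars.dedup p.vars.nodup_dedup (fun v => ?_)
  have hk := kalmar (AgDer := AgDer) (agBot := agBot) (agOr := agOr) p v p.vars.dedup
    (fun w hw => List.mem_dedup.2 hw)
  rwa [if_pos (h v)] at hk

end Kalmar

end TruthAux
namespace TruthAux

section Rules

variable {AgF At : Type} {AgDer : AgF → AgF → Prop} {agBot : AgF} {agOr : AgF → AgF → AgF}

local notation "⊩" φ => C5 AgDer agBot agOr φ

open PF in
theorem dAndL (a b : WF AgF At) : ⊩ (wand a b).imp a :=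
  taut (((var a).and (var b)).imp (var a)) (by intro v; simp <;> tauto)

open PF in
theorem dAndR (a b : WF AgF At) : ⊩ (wand a b).imp b :=
  taut (((var a).and (var b)).imp (var b)) (by intro v; simp <;> tauto)

open PF in
theorem dAndIntro {a b c : WF AgF At} (h1 : ⊩ c.imp a) (h2 : ⊩ c.imp b) :
    ⊩ c.imp (wand a b) :=
  C5.mp (C5.mp (taut (((var c).imp (var a)).imp (((var c).imp (var b)).imp
    ((var c).imp ((var a).and (var b))))) (by intro v; simp <;> tauto)) h1) h2

open PF in
theorem dAndMono {a a' b b' : WF AgF At} (h1 : ⊩ a.imp a') (h2 : ⊩ b.imp b') :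
    ⊩ (wand a b).imp (wand a' b') :=
  C5.mp (C5.mp (taut (((var a).imp (var a')).imp (((var b).imp (var b')).imp
    (((var a).and (var b)).imp ((var a').and (var b'))))) (by intro v; simp <;> tauto)) h1) h2

open PF in
theorem dContrap {a b : WF AgF At} (h : ⊩ a.imp b) : ⊩ (wneg b).imp (wneg a) :=
  C5.mp (taut (((var a).imp (var b)).imp (((var b).neg).imp ((var a).neg)))
    (by intro v; simp <;> tauto)) h

open PF in
theorem dOrIntroL (a b : WF AgF At) : ⊩ a.imp (wor a b) :=
  taut ((var a).imp ((var a).or (var b))) (by intro v; simp <;> tauto)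

open PF in
theorem dOrIntroR (a b : WF AgF At) : ⊩ b.imp (wor a b) :=
  taut ((var b).imp ((var a).or (var b))) (by intro v; simp <;> tauto)

open PF in
theorem dOrElim {a b c : WF AgF At} (h1 : ⊩ a.imp c) (h2 : ⊩ b.imp c) :
    ⊩ (wor a b).imp c :=
  C5.mp (C5.mp (taut (((var a).imp (var c)).imp (((var b).imp (var c)).imp
    (((var a).or (var b)).imp (var c)))) (by intro v; simp <;> tauto)) h1) h2

open PF in
theorem dOrMono {a a' b b' : WF AgF At} (h1 : ⊩ a.imp a') (h2 : ⊩ b.imp b') :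
    ⊩ (wor a b).imp (wor a' b') :=
  dOrElim (dcomp (dOrIntroL a' b') h1) (dcomp (dOrIntroR a' b') h2)

open PF in
theorem dExfalso (a : WF AgF At) : ⊩ WF.bot.imp a :=
  taut (PF.bot.imp (var a)) (by intro v; simp)

theorem dS {a b c : WF AgF At} (h1 : ⊩ c.imp (a.imp b)) (h2 : ⊩ c.imp a) :
    ⊩ c.imp b :=
  C5.mp (C5.mp (C5.ax2 c a b) h1) h2

theorem conj_of_mem : ∀ {l : List (WF AgF At)} {a : WF AgF At}, a ∈ l → ⊩ (conj l).imp a := by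
  intro l
  induction l with
  | nil => intro a ha; exact absurd ha List.not_mem_nil
  | cons b l ih =>
    intro a ha
    rcases List.mem_cons.1 ha with rfl | ha'
    · exact dAndL a (conj l)
    · exact dcomp (ih ha') (dAndR b (conj l))

open PF in
theorem conj_intro : ∀ {l : List (WF AgF At)} {c : WF AgF At},
    (∀ a ∈ l, ⊩ c.imp a) → ⊩ c.imp (conj l) := by
  intro l
  induction l with
  | nil =>
    intro c _
    exact taut ((var c).imp PF.bot.neg) (by intro v; simp)
  | cons b l ih =>
    intro c h
    exact dAndIntro (h b (by simp)) (ih (fun a ha => h a (List.mem_cons_of_mem _ ha)))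

theorem conj_mono_list {l l' : List (WF AgF At)} (hsub : ∀ a ∈ l', a ∈ l) :
    ⊩ (conj l).imp (conj l') :=
  conj_intro (fun a ha => conj_of_mem (hsub a ha))

/-- world-level big disjunction -/
def wbigOr {AgF At : Type} (l : List (WF AgF At)) : WF AgF At := l.foldr wor .bot

theorem wbigOr_of_mem : ∀ {l : List (WF AgF At)} {a : WF AgF At},
    a ∈ l → ⊩ a.imp (wbigOr l) := by
  intro l
  induction l with
  | nil => intro a ha; exact absurd ha List.not_mem_nil
  | cons b l ih =>
    intro a ha
    rcases List.mem_cons.1 ha with rfl | ha'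
    · exact dOrIntroL a (wbigOr l)
    · exact dcomp (dOrIntroR b (wbigOr l)) (ih ha')

theorem wbigOr_elim : ∀ {l : List (WF AgF At)} {c : WF AgF At},
    (∀ a ∈ l, ⊩ a.imp c) → ⊩ (wbigOr l).imp c := by
  intro l
  induction l with
  | nil => intro c _; exact dExfalso c
  | cons b l ih =>
    intro c h
    exact dOrElim (h b (by simp)) (ih (fun a ha => h a (List.mem_cons_of_mem _ ha)))

/-! ### consistency rules -/

theorem ConsMono {a b : WF AgF At} (h : ⊩ a.imp b)
    (hc : Consistent AgDer agBot agOr a) : Consistent AgDer agBot agOr b :=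
  fun hb => hc (dcomp hb h)

open PF in
theorem ConsOr {a b c : WF AgF At} (h : ⊩ a.imp (wor b c))
    (hc : Consistent AgDer agBot agOr a) :
    Consistent AgDer agBot agOr b ∨ Consistent AgDer agBot agOr c := by
  by_contra hbc
  push_neg at hbc
  have hnb : ⊩ wneg b := not_not.1 hbc.1
  have hnc : ⊩ wneg c := not_not.1 hbc.2
  have t : ⊩ (wor b c).imp .bot :=
    C5.mp (C5.mp (taut (((var b).neg).imp (((var c).neg).imp
      (((var b).or (var c)).imp PF.bot))) (by intro v; simp <;> tauto)) hnb) hnc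
  exact hc (dcomp t h)

/-! ### modal rules -/

theorem dKdist {a b : WF AgF At} (ψ : AgF) (h : ⊩ a.imp b) :
    ⊩ (WF.C ψ a).imp (.C ψ b) :=
  C5.mp (C5.axK ψ a b) (C5.nec ψ h)

theorem dPmono {a b : WF AgF At} (ψ : AgF) (h : ⊩ a.imp b) :
    ⊩ (wP ψ a).imp (wP ψ b) :=
  dContrap (dKdist ψ (dContrap h))

open PF in
theorem dPor (ψ : AgF) (a b : WF AgF At) :
    ⊩ (wP ψ (wor a b)).imp (wor (wP ψ a) (wP ψ b)) := by
  have h1 : ⊩ (wneg a).imp ((wneg b).imp (wneg (wor a b))) :=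
    taut (((var a).neg).imp (((var b).neg).imp (((var a).or (var b)).neg)))
      (by intro v; simp <;> tauto)
  have h2 : ⊩ (WF.C ψ (wneg a)).imp ((WF.C ψ (wneg b)).imp (.C ψ (wneg (wor a b)))) :=
    dcomp (C5.axK ψ (wneg b) (wneg (wor a b))) (C5.mp (C5.axK ψ _ _) (C5.nec ψ h1))
  exact C5.mp (taut (((var (WF.C ψ (wneg a))).imp ((var (WF.C ψ (wneg b))).imp
      (var (WF.C ψ (wneg (wor a b)))))).imp
      ((((var (WF.C ψ (wneg (wor a b)))).neg)).imp
        ((((var (WF.C ψ (wneg a))).neg).neg).imp ((var (WF.C ψ (wneg b))).neg))))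
    (by intro v; simp <;> tauto)) h2

open PF in
theorem dCPbot (ψ : AgF) (a : WF AgF At) :
    ⊩ (wand (WF.C ψ a) (wP ψ (wneg a))).imp .bot := by
  have e1 : ⊩ (WF.C ψ a).imp (.C ψ (wneg (wneg a))) := dKdist ψ (dni a)
  exact C5.mp (taut (((var (WF.C ψ a)).imp (var (WF.C ψ (wneg (wneg a))))).imp
      ((((var (WF.C ψ a)).and ((var (WF.C ψ (wneg (wneg a)))).neg)).imp PF.bot)))
    (by intro v; simp <;> tauto)) e1

open PF in
theorem ConsPinner {x y : WF AgF At} {ψ : AgF}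
    (hc : Consistent AgDer agBot agOr (wand y (wP ψ x))) :
    Consistent AgDer agBot agOr x := by
  intro hx
  have hnP : ⊩ wneg (wP ψ x) := C5.mp (dni _) (C5.nec ψ hx)
  have t : ⊩ ((wP ψ x).imp .bot).imp ((wand y (wP ψ x)).imp .bot) :=
    taut (((var (wP ψ x)).imp PF.bot).imp (((var y).and (var (wP ψ x))).imp PF.bot))
      (by intro v; simp <;> tauto)
  exact hc (C5.mp t hnP)

end Rules

end TruthAux
namespace TruthAux

section MCS

variable {AgF At : Type} {AgDer : AgF → AgF → Prop} {agBot : AgF} {agOr : AgF → AgF → AgF}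

local notation "⊩" φ => C5 AgDer agBot agOr φ

theorem sneg_cases (φ : WF AgF At) :
    sneg φ = wneg φ ∨ ∃ φ', φ = wneg φ' ∧ sneg φ = φ' := by
  cases φ with
  | bot => left; rfl
  | atom p => left; rfl
  | C ψ f => left; rfl
  | imp a b =>
    cases b with
    | bot => exact Or.inr ⟨a, rfl, rfl⟩
    | atom p => left; rfl
    | imp c d => left; rfl
    | C ψ f => left; rfl

theorem dSnegImp (φ : WF AgF At) : ⊩ (wneg φ).imp (sneg φ) := by
  rcases sneg_cases φ with h | ⟨φ', rfl, h⟩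
  · rw [h]; exact dI _
  · rw [h]; exact dne φ'

theorem dSnegContra (φ : WF AgF At) : ⊩ φ.imp ((sneg φ).imp .bot) := by
  rcases sneg_cases φ with h | ⟨φ', rfl, h⟩
  · rw [h]; exact dni φ
  · rw [h]; exact dI (wneg φ')

open PF in
theorem dSplitSneg (x φ : WF AgF At) :
    ⊩ x.imp (wor (wand x φ) (wand x (sneg φ))) := by
  rcases sneg_cases φ with h | ⟨φ', rfl, h⟩
  · rw [h]
    exact taut ((var x).imp (((var x).and (var φ)).or ((var x).and ((var φ).neg))))
      (by intro v; simp <;> tauto)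
  · rw [h]
    exact taut ((var x).imp (((var x).and ((var φ').neg)).or
      (((var x).and (var φ'))))) (by intro v; simp <;> tauto)

theorem conj_sneg_incon {l : List (WF AgF At)} {φ : WF AgF At}
    (h1 : φ ∈ l) (h2 : sneg φ ∈ l) : ⊩ wneg (conj l) := by
  have d1 : ⊩ (conj l).imp φ := conj_of_mem h1
  have d2 : ⊩ (conj l).imp (sneg φ) := conj_of_mem h2
  have hφ : ⊩ ictx [conj l] φ := Dctx.mp (Dctx.of d1) (Dctx.ax (by simp))
  have hs : ⊩ ictx [conj l] (sneg φ) := Dctx.mp (Dctx.of d2) (Dctx.ax (by simp))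
  exact Dctx.mp (l := [conj l]) (Dctx.mp (Dctx.of (dSnegContra φ)) hφ) hs

variable {Sig : Finset (WF AgF At)}

theorem mcs_mem_closure {Γ : Finset (WF AgF At)} (hΓ : MCS AgDer agBot agOr Sig Γ)
    {φ : WF AgF At} (hφS : φ ∈ Sig) (hd : ⊩ (conj Γ.toList).imp φ) : φ ∈ Γ := by
  obtain ⟨hsub, hcons, hmax⟩ := hΓ
  have h1 : ⊩ (conj Γ.toList).imp (conj (insert φ Γ).toList) := by
    refine conj_intro (fun a ha => ?_)
    rcases Finset.mem_insert.1 (Finset.mem_toList.1 ha) with rfl | h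
    · exact hd
    · exact conj_of_mem (Finset.mem_toList.2 h)
  have heq := hmax (insert φ Γ) (Finset.insert_subset_iff.2 ⟨hφS, hsub⟩)
    (Finset.subset_insert _ _) (ConsMono h1 hcons)
  rw [← heq]; exact Finset.mem_insert_self _ _

open PF in
theorem mcs_mem_or_sneg {Γ : Finset (WF AgF At)} (hΓ : MCS AgDer agBot agOr Sig Γ)
    (hsneg : ∀ φ ∈ Sig, sneg φ ∈ Sig) {φ : WF AgF At} (hφS : φ ∈ Sig) :
    φ ∈ Γ ∨ sneg φ ∈ Γ := by
  by_cases h : φ ∈ Γ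
  · exact Or.inl h
  right
  obtain ⟨hsub, hcons, hmax⟩ := hΓ
  have hne : insert φ Γ ≠ Γ := fun he => h (he ▸ Finset.mem_insert_self φ Γ)
  have hinc : ¬ Consistent AgDer agBot agOr (conj (insert φ Γ).toList) := fun hc =>
    hne (hmax _ (Finset.insert_subset_iff.2 ⟨hφS, hsub⟩) (Finset.subset_insert _ _) hc)
  have hni : ⊩ wneg (conj (insert φ Γ).toList) := not_not.1 hinc
  have h2 : ⊩ (wand φ (conj Γ.toList)).imp (conj (insert φ Γ).toList) := by
    refine conj_intro (fun a ha => ?_)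
    rcases Finset.mem_insert.1 (Finset.mem_toList.1 ha) with rfl | hmem
    · exact dAndL _ _
    · exact dcomp (conj_of_mem (Finset.mem_toList.2 hmem)) (dAndR _ _)
  have h3 : ⊩ (conj Γ.toList).imp (wneg φ) := by
    have hn : ⊩ (wand φ (conj Γ.toList)).imp .bot := dcomp hni h2
    exact C5.mp (taut ((((var φ).and (var (conj Γ.toList))).imp PF.bot).imp
      ((var (conj Γ.toList)).imp ((var φ).neg))) (by intro v; simp <;> tauto)) hn
  exact mcs_mem_closure ⟨hsub, hcons, hmax⟩ (hsneg φ hφS) (dcomp (dSnegImp φ) h3)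

theorem mcs_not_both {Γ : Finset (WF AgF At)} (hΓ : MCS AgDer agBot agOr Sig Γ)
    {φ : WF AgF At} (h1 : φ ∈ Γ) (h2 : sneg φ ∈ Γ) : False :=
  hΓ.2.1 (conj_sneg_incon (Finset.mem_toList.2 h1) (Finset.mem_toList.2 h2))

theorem mcs_of_complete {Δ : Finset (WF AgF At)} (hsub : Δ ⊆ Sig)
    (hcons : Consistent AgDer agBot agOr (conj Δ.toList))
    (hcomp : ∀ φ ∈ Sig, φ ∈ Δ ∨ sneg φ ∈ Δ) : MCS AgDer agBot agOr Sig Δ := by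
  refine ⟨hsub, hcons, fun Δ' hΔ'S hΔΔ' hcons' => ?_⟩
  refine Finset.Subset.antisymm (fun φ hφ' => ?_) hΔΔ'
  by_contra h
  rcases hcomp φ (hΔ'S hφ') with h' | h'
  · exact h h'
  · exact hcons' (conj_sneg_incon (Finset.mem_toList.2 hφ')
      (Finset.mem_toList.2 (hΔΔ' h')))

theorem lindenbaum_core (Con : Finset (WF AgF At) → Prop)
    (hsnegS : ∀ φ ∈ Sig, sneg φ ∈ Sig)
    (hstep : ∀ Δ, Δ ⊆ Sig → ∀ φ ∈ Sig, Con Δ → Con (insert φ Δ) ∨ Con (insert (sneg φ) Δ)) :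
    ∀ l : List (WF AgF At), (∀ x ∈ l, x ∈ Sig) → ∀ Δ, Δ ⊆ Sig → Con Δ →
      ∃ Δ', Δ ⊆ Δ' ∧ Δ' ⊆ Sig ∧ Con Δ' ∧ ∀ φ ∈ l, φ ∈ Δ' ∨ sneg φ ∈ Δ' := by
  intro l
  induction l with
  | nil => exact fun _ Δ hΔ hc => ⟨Δ, Finset.Subset.refl Δ, hΔ, hc, by simp⟩
  | cons φ l ih =>
    intro hls Δ hΔ hc
    have hφS : φ ∈ Sig := hls φ (List.mem_cons_self)
    have hls' : ∀ x ∈ l, x ∈ Sig := fun x hx => hls x (List.mem_cons_of_mem _ hx)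
    rcases hstep Δ hΔ φ hφS hc with h | h
    · obtain ⟨Δ', h1, h2, h3, h4⟩ := ih hls' (insert φ Δ)
        (Finset.insert_subset_iff.2 ⟨hφS, hΔ⟩) h
      refine ⟨Δ', (Finset.subset_insert _ _).trans h1, h2, h3, fun χ hχ => ?_⟩
      rcases List.mem_cons.1 hχ with rfl | hχ'
      · exact Or.inl (h1 (Finset.mem_insert_self _ _))
      · exact h4 χ hχ'
    · obtain ⟨Δ', h1, h2, h3, h4⟩ := ih hls' (insert (sneg φ) Δ)
        (Finset.insert_subset_iff.2 ⟨hsnegS φ hφS, hΔ⟩) h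
      refine ⟨Δ', (Finset.subset_insert _ _).trans h1, h2, h3, fun χ hχ => ?_⟩
      rcases List.mem_cons.1 hχ with rfl | hχ'
      · exact Or.inr (h1 (Finset.mem_insert_self _ _))
      · exact h4 χ hχ'

end MCS

end TruthAux
namespace TruthAux

section Modal

variable {AgF At : Type} {AgDer : AgF → AgF → Prop} {agBot : AgF} {agOr : AgF → AgF → AgF}

local notation "⊩" φ => C5 AgDer agBot agOr φ

theorem dSnegImpRev (φ : WF AgF At) : ⊩ (sneg φ).imp (wneg φ) := by
  rcases sneg_cases φ with h | ⟨φ', rfl, h⟩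
  · rw [h]; exact dI _
  · rw [h]; exact dni φ'

variable {Sig : Finset (WF AgF At)}

/-- preservation of `C ψ φ` along a canonical step -/
theorem step_preserve {ψ : AgF} {φ : WF AgF At} (hCS : WF.C ψ φ ∈ Sig)
    (hsneg : ∀ χ ∈ Sig, sneg χ ∈ Sig)
    {Θ Δ : Finset (WF AgF At)} (hΘ : MCS AgDer agBot agOr Sig Θ)
    (hΔ : MCS AgDer agBot agOr Sig Δ)
    {a : AgF} (ha : AgDer a ψ)
    (hrel : relP AgDer agBot agOr a Θ Δ) (hmem : WF.C ψ φ ∈ Θ) : WF.C ψ φ ∈ Δ := by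
  by_contra hnot
  have h1 : ⊩ (conj Θ.toList).imp (WF.C a (.C ψ φ)) :=
    dcomp (C5.am (.C ψ φ) ha)
      (dcomp (C5.ax4 ψ φ) (conj_of_mem (Finset.mem_toList.2 hmem)))
  have hsnegΔ : sneg (WF.C ψ φ) ∈ Δ :=
    (mcs_mem_or_sneg hΔ hsneg hCS).resolve_left hnot
  have h2 : ⊩ (conj Δ.toList).imp (wneg (WF.C ψ φ)) :=
    dcomp (dSnegImpRev _) (conj_of_mem (Finset.mem_toList.2 hsnegΔ))
  have h4 : ⊩ (wand (conj Θ.toList) (wP a (conj Δ.toList))).imp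
      (wand (WF.C a (.C ψ φ)) (wP a (wneg (.C ψ φ)))) :=
    dAndMono h1 (dPmono a h2)
  exact hrel (dcomp (dCPbot a (.C ψ φ)) h4)

open PF in
/-- Existence lemma: if `χ_Θ ⊬ C_a β` then there is an MCS `Δ` with
`Θ ∼^p_a Δ` such that `¬β ∧ χ_Δ` is consistent. -/
theorem exists_rel_refuting (hsnegS : ∀ χ ∈ Sig, sneg χ ∈ Sig)
    {Θ : Finset (WF AgF At)} (hΘ : MCS AgDer agBot agOr Sig Θ) {a : AgF} {β : WF AgF At}
    (hnot : ¬ ⊩ (conj Θ.toList).imp (.C a β)) :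
    ∃ Δ, MCS AgDer agBot agOr Sig Δ ∧ relP AgDer agBot agOr a Θ Δ ∧
      Consistent AgDer agBot agOr (conj (wneg β :: Δ.toList)) := by
  set χΘ := conj Θ.toList with hχΘ
  have hc0 : Consistent AgDer agBot agOr (wand χΘ (wP a (wneg β))) := by
    intro hder
    apply hnot
    have t : ⊩ ((wand χΘ (wP a (wneg β))).imp .bot).imp
        (χΘ.imp (.C a (wneg (wneg β)))) :=
      taut ((((var χΘ).and ((var (WF.C a (wneg (wneg β)))).neg)).imp PF.bot).imp
        ((var χΘ).imp (var (WF.C a (wneg (wneg β))))))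
        (by intro v; simp <;> tauto)
    exact dcomp (dKdist a (dne β)) (C5.mp t hder)
  have hCon0 : Consistent AgDer agBot agOr
      (wand χΘ (wP a (conj (wneg β :: (∅ : Finset (WF AgF At)).toList)))) := by
    have hh : ⊩ (wneg β).imp (conj (wneg β :: (∅ : Finset (WF AgF At)).toList)) := by
      refine conj_intro (fun x hx => ?_)
      have : x = wneg β := by simpa using hx
      subst this; exact dI _
    exact ConsMono (dAndMono (dI χΘ) (dPmono a hh)) hc0
  have hstep : ∀ Δ, Δ ⊆ Sig → ∀ φ ∈ Sig,
      Consistent AgDer agBot agOr (wand χΘ (wP a (conj (wneg β :: Δ.toList)))) →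
      Consistent AgDer agBot agOr (wand χΘ (wP a (conj (wneg β :: (insert φ Δ).toList)))) ∨
      Consistent AgDer agBot agOr
        (wand χΘ (wP a (conj (wneg β :: (insert (sneg φ) Δ).toList)))) := by
    intro Δ hΔS φ hφS hc
    set A := conj (wneg β :: Δ.toList) with hA
    have conv : ∀ χ : WF AgF At,
        ⊩ (wand A χ).imp (conj (wneg β :: (insert χ Δ).toList)) := by
      intro χ
      refine conj_intro (fun x hx => ?_)
      rcases List.mem_cons.1 hx with rfl | hx'
      · exact dcomp (conj_of_mem (List.mem_cons_self)) (dAndL _ _)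
      · rcases Finset.mem_insert.1 (Finset.mem_toList.1 hx') with rfl | hm
        · exact dAndR _ _
        · exact dcomp (conj_of_mem (List.mem_cons_of_mem _ (Finset.mem_toList.2 hm)))
            (dAndL _ _)
    have hsplit2 : ⊩ A.imp (wor (conj (wneg β :: (insert φ Δ).toList))
        (conj (wneg β :: (insert (sneg φ) Δ).toList))) :=
      dcomp (dOrMono (conv φ) (conv (sneg φ))) (dSplitSneg A φ)
    have hP : ⊩ (wP a A).imp (wor (wP a (conj (wneg β :: (insert φ Δ).toList)))
        (wP a (conj (wneg β :: (insert (sneg φ) Δ).toList)))) :=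
      dcomp (dPor a _ _) (dPmono a hsplit2)
    set B1 := wP a (conj (wneg β :: (insert φ Δ).toList)) with hB1
    set B2 := wP a (conj (wneg β :: (insert (sneg φ) Δ).toList)) with hB2
    have t4 : ⊩ ((wP a A).imp (wor B1 B2)).imp
        ((wand χΘ (wP a A)).imp (wor (wand χΘ B1) (wand χΘ B2))) :=
      taut (((var (wP a A)).imp ((var B1).or (var B2))).imp
        (((var χΘ).and (var (wP a A))).imp
          (((var χΘ).and (var B1)).or ((var χΘ).and (var B2)))))
        (by intro v; simp <;> tauto)
    exact ConsOr (C5.mp t4 hP) hc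
  obtain ⟨Δ, -, hΔS, hConΔ, hcomp'⟩ := lindenbaum_core
    (fun Δ => Consistent AgDer agBot agOr (wand χΘ (wP a (conj (wneg β :: Δ.toList)))))
    hsnegS hstep Sig.toList (fun x hx => Finset.mem_toList.1 hx) ∅
    (Finset.empty_subset _) hCon0
  have hcomp : ∀ φ ∈ Sig, φ ∈ Δ ∨ sneg φ ∈ Δ := fun φ hφ =>
    hcomp' φ (Finset.mem_toList.2 hφ)
  have hconsA : Consistent AgDer agBot agOr (conj (wneg β :: Δ.toList)) :=
    ConsPinner hConΔ
  have hconsΔ : Consistent AgDer agBot agOr (conj Δ.toList) :=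
    ConsMono (dAndR _ _) hconsA
  have hrel : relP AgDer agBot agOr a Θ Δ :=
    ConsMono (dAndMono (dI χΘ) (dPmono a (dAndR _ _))) hConΔ
  exact ⟨Δ, mcs_of_complete hΔS hconsΔ hcomp, hrel, hconsA⟩

/-- induction-axiom list lemma -/
theorem dIndList {β : WF AgF At} :
    ∀ l : List AgF, (∀ x ∈ l, ⊩ β.imp (.C x β)) →
      ⊩ β.imp (.C (bigOrA agBot agOr l) β)
  | [], _ => C5.axBot β
  | ψ :: l, h => by
    have ih := dIndList l (fun x hx => h x (List.mem_cons_of_mem _ hx))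
    have hψ := h ψ (List.mem_cons_self)
    have hand : ⊩ β.imp (wand (.C ψ β) (.C (bigOrA agBot agOr l) β)) := dAndIntro hψ ih
    exact C5.mp (C5.axInd ψ (bigOrA agBot agOr l) β)
      (C5.nec (agOr ψ (bigOrA agBot agOr l)) hand)

end Modal

end TruthAux

open TruthAux

/-- Truth Lemma: for every world `Γ` of the canonical model and every formula
`φ ∈ Σ`, we have `φ ∈ Γ` iff `C_Σ, Γ ⊨ φ`. -/

theorem truth_lemma {AgF At Ag : Type} (AgDer : AgF → AgF → Prop)
    (agBot : AgF) (agOr : AgF → AgF → AgF)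
    (hOr1 : ∀ ψ χ, AgDer ψ (agOr ψ χ))
    (hOr2 : ∀ ψ χ, AgDer χ (agOr ψ χ))
    (ext : AgF → Finset Ag) (hat : Ag → AgF)
    (hhat : ∀ a : Ag, ext (hat a) = {a})
    (hder : ∀ ψ : AgF, AgDer ψ (bigOrA agBot agOr ((ext ψ).toList.map hat)))
    (hder2 : ∀ (ψ : AgF), ∀ a ∈ ext ψ, AgDer (hat a) ψ)
    (Sig : Finset (WF AgF At))
    (hsubImp : ∀ φ χ : WF AgF At, WF.imp φ χ ∈ Sig → φ ∈ Sig ∧ χ ∈ Sig)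
    (hsubC : ∀ (ψ : AgF) (φ : WF AgF At), WF.C ψ φ ∈ Sig → φ ∈ Sig)
    (hsneg : ∀ φ ∈ Sig, sneg φ ∈ Sig)
    (hChat : ∀ (χ : AgF) (φ : WF AgF At), WF.C χ φ ∈ Sig →
      ∀ a : Ag, WF.C (hat a) φ ∈ Sig)
    (φ : WF AgF At) (hφ : φ ∈ Sig)
    (Γ : {Θ : Finset (WF AgF At) // MCS AgDer agBot agOr Sig Θ}) :
    φ ∈ Γ.1 ↔ satCan AgDer agBot agOr ext hat Sig Γ φ := by
  classical
  induction φ generalizing Γ with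
  | bot =>
    simp only [satCan]
    exact ⟨fun h => (Γ.2.2.1 (conj_of_mem (Finset.mem_toList.2 h))).elim, False.elim⟩
  | atom p =>
    simp only [satCan]
  | imp φ χ ihφ ihχ =>
    obtain ⟨hφS, hχS⟩ := hsubImp φ χ hφ
    simp only [satCan]
    rw [← ihφ hφS Γ, ← ihχ hχS Γ]
    constructor
    · intro h hφΓ
      exact mcs_mem_closure Γ.2 hχS
        (dS (conj_of_mem (Finset.mem_toList.2 h)) (conj_of_mem (Finset.mem_toList.2 hφΓ)))
    · intro h
      by_cases hφΓ : φ ∈ Γ.1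
      · exact mcs_mem_closure Γ.2 hφ
          (dcomp (C5.ax1 χ φ) (conj_of_mem (Finset.mem_toList.2 (h hφΓ))))
      · have hs : sneg φ ∈ Γ.1 := (mcs_mem_or_sneg Γ.2 hsneg hφS).resolve_left hφΓ
        exact mcs_mem_closure Γ.2 hφ (dcomp (dExfalsoNeg φ χ)
          (dcomp (dSnegImpRev φ) (conj_of_mem (Finset.mem_toList.2 hs))))
  | C ψ φ ihφ =>
    have hφS := hsubC ψ φ hφ
    simp only [satCan]
    constructor
    · intro h Δ hreach
      have hmem : WF.C ψ φ ∈ Δ.1 := by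
        induction hreach with
        | refl => exact h
        | @tail b c hr hst ih =>
          obtain ⟨a, haψ, hrel⟩ := hst
          exact step_preserve hφ hsneg b.2 c.2 (hder2 ψ a haψ) hrel ih
      exact (ihφ hφS Δ).1 (mcs_mem_closure Δ.2 hφS
        (dcomp (C5.axT ψ φ) (conj_of_mem (Finset.mem_toList.2 hmem))))
    · intro hsat
      let rel := fun (Θ Θ' : {Θ : Finset (WF AgF At) // MCS AgDer agBot agOr Sig Θ}) =>
        ∃ a ∈ ext ψ, relP AgDer agBot agOr (hat a) Θ.1 Θ'.1
      let Reach : Finset (WF AgF At) → Prop := fun Θ =>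
        ∃ h : MCS AgDer agBot agOr Sig Θ, Relation.ReflTransGen rel Γ ⟨Θ, h⟩
      let L : List (WF AgF At) :=
        ((Sig.powerset.filter Reach).toList).map (fun Θ => conj Θ.toList)
      have hmemL : ∀ Θ : Finset (WF AgF At), Θ ⊆ Sig → Reach Θ → conj Θ.toList ∈ L :=
        fun Θ hsub hR => List.mem_map_of_mem
          (Finset.mem_toList.2 (Finset.mem_filter.2 ⟨Finset.mem_powerset.2 hsub, hR⟩))
      have hLmem : ∀ x ∈ L, ∃ Θ : Finset (WF AgF At), Reach Θ ∧ x = conj Θ.toList := by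
        intro x hx
        obtain ⟨Θ, hΘ, rfl⟩ := List.mem_map.1 hx
        exact ⟨Θ, (Finset.mem_filter.1 (Finset.mem_toList.1 hΘ)).2, rfl⟩
      have hβφ : C5 AgDer agBot agOr ((wbigOr L).imp φ) := by
        refine wbigOr_elim (fun x hx => ?_)
        obtain ⟨Θ, hR, rfl⟩ := hLmem x hx
        obtain ⟨hM, hr⟩ := hR
        exact conj_of_mem (Finset.mem_toList.2 ((ihφ hφS ⟨Θ, hM⟩).2 (hsat ⟨Θ, hM⟩ hr)))
      have hstep2 : ∀ Θ : Finset (WF AgF At), Reach Θ → ∀ a ∈ ext ψ,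
          C5 AgDer agBot agOr ((conj Θ.toList).imp (.C (hat a) (wbigOr L))) := by
        intro Θ hR a ha
        obtain ⟨hM, hr⟩ := hR
        by_contra hno
        obtain ⟨Δ, hΔM, hrel, hconsA⟩ := exists_rel_refuting hsneg hM hno
        have hRΔ : Reach Δ := ⟨hΔM, hr.tail ⟨a, ha, hrel⟩⟩
        refine hconsA (dS (conj_of_mem (List.mem_cons_self)) ?_)
        exact dcomp (wbigOr_of_mem (hmemL Δ hΔM.1 hRΔ))
          (conj_mono_list (fun x hx => List.mem_cons_of_mem _ hx))
      have hstep3 : ∀ x ∈ (ext ψ).toList.map hat,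
          C5 AgDer agBot agOr ((wbigOr L).imp (.C x (wbigOr L))) := by
        intro x hx
        obtain ⟨a, ha, rfl⟩ := List.mem_map.1 hx
        refine wbigOr_elim (fun y hy => ?_)
        obtain ⟨Θ, hR, rfl⟩ := hLmem y hy
        exact hstep2 Θ hR a (Finset.mem_toList.1 ha)
      have hstep5 : C5 AgDer agBot agOr ((wbigOr L).imp (.C ψ (wbigOr L))) :=
        dcomp (C5.am (wbigOr L) (hder ψ)) (dIndList _ hstep3)
      have hstep6 : C5 AgDer agBot agOr ((wbigOr L).imp (.C ψ φ)) :=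
        dcomp (dKdist ψ hβφ) hstep5
      have hΓR : Reach Γ.1 := ⟨Γ.2, Relation.ReflTransGen.refl⟩
      exact mcs_mem_closure Γ.2 hφ
        (dcomp hstep6 (wbigOr_of_mem (hmemL Γ.1 Γ.2.1 hΓR)))
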